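/- If I(G;x) = \prod_{i=1}^{\alpha}(1 + r_i x) has only real zeros (r_i > 0) and G has n vertices, then I(G \circ K_1; x) = (1+x)^{n-\alpha} \prod_{i=1}^{\alpha} (1 + (1 + r_i) x), and hence I(G \circ K_1; x) has only real zeros. -/

import Mathlib

open Polynomial

def OnlyRealZeros (P : Polynomial ℝ) : Prop :=
  ∀ z : ℂ, Polynomial.aeval z P = 0 → z.im = 0

open scoped Classical in
/-- The independence polynomial of a finite simple graph. -/
noncomputable def indepPoly {V : Type} [Fintype V] (G : SimpleGraph V) : Polynomial ℝ :=
  ∑ s ∈ Finset.univ.filter (fun s : Finset V => ∀ u ∈ s, ∀ v ∈ s, ¬ G.Adj u v),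
    (X : Polynomial ℝ) ^ s.card

/-- The corona `G ∘ K₁`: attach a private pendant vertex to each vertex of `G`. -/
def coronaK1 {V : Type} (G : SimpleGraph V) : SimpleGraph (V ⊕ V) :=
  SimpleGraph.fromRel (fun x y =>
    match x, y with
    | Sum.inl a, Sum.inl b => G.Adj a b
    | Sum.inl a, Sum.inr b => a = b
    | _, _ => False)

lemma corona_adj {V : Type} (G : SimpleGraph V) (x y : V ⊕ V) :
    (coronaK1 G).Adj x y ↔ x ≠ y ∧
      ((match x, y with
        | Sum.inl a, Sum.inl b => G.Adj a b
        | Sum.inl a, Sum.inr b => a = b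
        | _, _ => False) ∨
       (match y, x with
        | Sum.inl a, Sum.inl b => G.Adj a b
        | Sum.inl a, Sum.inr b => a = b
        | _, _ => False)) := by
  rw [coronaK1, SimpleGraph.fromRel_adj]

open Finset in
lemma corona_indep_iff {V : Type} [Fintype V] (G : SimpleGraph V) (s t : Finset V) :
    (∀ u ∈ s.disjSum t, ∀ v ∈ s.disjSum t, ¬ (coronaK1 G).Adj u v) ↔
      ((∀ u ∈ s, ∀ v ∈ s, ¬ G.Adj u v) ∧ Disjoint s t) := by
  constructor
  · intro h
    constructor
    · intro u hu v hv hadj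
      exact h (Sum.inl u) (by simp [hu]) (Sum.inl v) (by simp [hv])
        ((corona_adj G _ _).2 ⟨by simp [hadj.ne], Or.inl hadj⟩)
    · rw [Finset.disjoint_left]
      intro a ha ha'
      exact h (Sum.inl a) (by simp [ha]) (Sum.inr a) (by simp [ha'])
        ((corona_adj G _ _).2 ⟨by simp, Or.inl rfl⟩)
  · rintro ⟨hindep, hdisj⟩ u hu v hv hadj
    rw [corona_adj] at hadj
    obtain ⟨hne, h1 | h1⟩ := hadj <;>
    · match u, v with
      | Sum.inl a, Sum.inl b =>
        simp only [inl_mem_disjSum] at hu hv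
        first
        | exact hindep a hu b hv h1
        | exact hindep b hv a hu h1
      | Sum.inl a, Sum.inr b =>
        simp only [inl_mem_disjSum, inr_mem_disjSum] at hu hv
        first
        | (subst h1; exact Finset.disjoint_left.1 hdisj hu hv)
        | exact h1.elim
      | Sum.inr a, Sum.inl b =>
        simp only [inl_mem_disjSum, inr_mem_disjSum] at hu hv
        first
        | (subst h1; exact Finset.disjoint_left.1 hdisj hv hu)
        | exact h1.elim
      | Sum.inr a, Sum.inr b => exact h1.elim

open Finset in
open scoped Classical in
lemma pow_sum_powerset {V : Type} (A : Finset V) :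
    ∑ t ∈ A.powerset, (X : ℝ[X]) ^ t.card = (1 + X) ^ A.card := by
  have h := Finset.prod_add (fun _ : V => (X : ℝ[X])) (fun _ => 1) A
  simp only [Finset.prod_const, one_pow, mul_one] at h
  rw [add_comm 1 (X:ℝ[X])]; exact h.symm

open Finset in
open scoped Classical in
lemma indepPoly_corona {V : Type} [Fintype V] (G : SimpleGraph V) :
    indepPoly (coronaK1 G) =
      ∑ s ∈ Finset.univ.filter (fun s : Finset V => ∀ u ∈ s, ∀ v ∈ s, ¬ G.Adj u v),
        (X : ℝ[X]) ^ s.card * (1 + X) ^ (Fintype.card V - s.card) := by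
  have key : indepPoly (coronaK1 G)
      = ∑ p ∈ ((Finset.univ.filter
            (fun s : Finset V => ∀ u ∈ s, ∀ v ∈ s, ¬ G.Adj u v)).sigma
            fun s => (sᶜ).powerset),
          (X : ℝ[X]) ^ (p.1.card + p.2.card) := by
    rw [indepPoly]
    refine Finset.sum_nbij' (i := fun T => ⟨T.toLeft, T.toRight⟩)
      (j := fun p => p.1.disjSum p.2) ?_ ?_ ?_ ?_ ?_
    · intro T hT
      simp only [Finset.mem_filter, Finset.mem_univ, true_and] at hT
      rw [← toLeft_disjSum_toRight (u := T)] at hT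
      rw [corona_indep_iff] at hT
      simp only [Finset.mem_sigma, Finset.mem_filter, Finset.mem_univ, true_and,
        Finset.mem_powerset]
      exact ⟨hT.1, fun a ha => Finset.mem_compl.2 (Finset.disjoint_right.1 hT.2 ha)⟩
    · intro p hp
      simp only [Finset.mem_sigma, Finset.mem_filter, Finset.mem_univ, true_and,
        Finset.mem_powerset] at hp
      simp only [Finset.mem_filter, Finset.mem_univ, true_and]
      rw [corona_indep_iff]
      refine ⟨hp.1, Finset.disjoint_right.2 fun a ha => Finset.mem_compl.1 (hp.2 ha)⟩
    · intro T hT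
      exact toLeft_disjSum_toRight
    · intro p hp
      simp
    · intro T hT
      rw [← toLeft_disjSum_toRight (u := T), card_disjSum]
      simp
  rw [key, Finset.sum_sigma]
  refine Finset.sum_congr rfl fun s hs => ?_
  calc ∑ t ∈ (sᶜ).powerset, (X : ℝ[X]) ^ (s.card + t.card)
      = (X : ℝ[X]) ^ s.card * ∑ t ∈ (sᶜ).powerset, (X : ℝ[X]) ^ t.card := by
        rw [Finset.mul_sum]; exact Finset.sum_congr rfl fun t _ => pow_add _ _ _
    _ = (X : ℝ[X]) ^ s.card * (1 + X) ^ (Fintype.card V - s.card) := by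
        rw [pow_sum_powerset, Finset.card_compl]

theorem stmt_18 {V : Type} [Fintype V] (G : SimpleGraph V) (n α : ℕ)
    (hn : n = Fintype.card V) (r : Fin α → ℝ) (hr : ∀ i, 0 < r i)
    (hfac : indepPoly G = ∏ i, (1 + C (r i) * X)) :
    indepPoly (coronaK1 G) =
      (1 + X) ^ (n - α) * ∏ i, (1 + C (1 + r i) * X) ∧
    OnlyRealZeros (indepPoly (coronaK1 G)) := by
  classical
  have hαn : α ≤ n := by
    have h1 : (indepPoly G).natDegree ≤ Fintype.card V := by
      rw [indepPoly]
      apply Polynomial.natDegree_sum_le_of_forall_le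
      intro s _
      simpa using Finset.card_le_univ s
    have h2 : (indepPoly G).natDegree = α := by
      rw [hfac, Polynomial.natDegree_prod]
      · have hd : ∀ i : Fin α, ((1 : ℝ[X]) + C (r i) * X).natDegree = 1 := fun i => by
          rw [add_comm, ← Polynomial.C_1, Polynomial.natDegree_linear (hr i).ne']
        simp [hd]
      · intro i _ h
        have := congrArg (Polynomial.eval 0) h
        simp at this
    omega
  have hfact : indepPoly (coronaK1 G)
      = (1 + X) ^ (n - α) * ∏ i, (1 + C (1 + r i) * X) := by
    apply Polynomial.eq_of_infinite_eval_eq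
    have hinf : ({x : ℝ | x ≠ -1}).Infinite := by
      have hfin : ({-1} : Set ℝ).Finite := Set.finite_singleton _
      have := hfin.infinite_compl
      convert this using 1
      ext x; simp
    refine hinf.mono ?_
    intro x hx
    simp only [Set.mem_setOf_eq] at hx ⊢
    have hu : (1 : ℝ) + x ≠ 0 := fun h => hx (by linarith)
    rw [indepPoly_corona]
    simp only [Polynomial.eval_finset_sum, Polynomial.eval_mul, Polynomial.eval_pow,
      Polynomial.eval_add, Polynomial.eval_one, Polynomial.eval_X, Polynomial.eval_prod,
      Polynomial.eval_C]
    have hPev : ∑ s ∈ Finset.univ.filter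
          (fun s : Finset V => ∀ u ∈ s, ∀ v ∈ s, ¬ G.Adj u v),
          (x / (1 + x)) ^ s.card = ∏ i, (1 + r i * (x / (1 + x))) := by
      have h0 := congrArg (Polynomial.eval (x / (1 + x))) hfac
      rw [indepPoly] at h0
      simpa [Polynomial.eval_finset_sum, Polynomial.eval_prod] using h0
    calc ∑ s ∈ Finset.univ.filter
          (fun s : Finset V => ∀ u ∈ s, ∀ v ∈ s, ¬ G.Adj u v),
          x ^ s.card * (1 + x) ^ (Fintype.card V - s.card)
        = (1 + x) ^ n * ∑ s ∈ Finset.univ.filter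
            (fun s : Finset V => ∀ u ∈ s, ∀ v ∈ s, ¬ G.Adj u v),
            (x / (1 + x)) ^ s.card := by
          rw [Finset.mul_sum]
          refine Finset.sum_congr rfl fun s _ => ?_
          have hsn : s.card ≤ n := hn ▸ Finset.card_le_univ s
          rw [← hn, pow_sub₀ _ hu hsn, div_pow]
          field_simp
      _ = (1 + x) ^ n * ∏ i, (1 + r i * (x / (1 + x))) := by rw [hPev]
      _ = (1 + x) ^ (n - α) * ∏ i, (1 + (1 + r i) * x) := by
          have hsplit : (1 + x) ^ n = (1 + x) ^ (n - α) * (1 + x) ^ α := by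
            rw [← pow_add]; congr 1; omega
          rw [hsplit, mul_assoc]
          congr 1
          have : ((1 : ℝ) + x) ^ α = ∏ _i : Fin α, (1 + x) := by
            simp
          rw [this, ← Finset.prod_mul_distrib]
          refine Finset.prod_congr rfl fun i _ => ?_
          field_simp
          ring
  refine ⟨hfact, ?_⟩
  intro z hz
  rw [hfact] at hz
  simp only [map_mul, map_pow, map_prod, map_add, map_one, Polynomial.aeval_X,
    Polynomial.aeval_C] at hz
  rcases mul_eq_zero.1 hz with h | h
  · have h1 : (1 : ℂ) + z = 0 := (pow_eq_zero_iff'.mp h).1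
    have := congrArg Complex.im h1
    simpa using this
  · obtain ⟨i, -, hi⟩ := Finset.prod_eq_zero_iff.1 h
    have h2 := congrArg Complex.im hi
    simp [Complex.add_im, Complex.mul_im] at h2
    rcases h2 with h2 | h2
    · nlinarith [hr i]
    · exact h2
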